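/- Let D be a Young diagram fitting below the diagonal of R_{P,Q} (P = Kp, Q = Kq, p, q coprime positive, K positive). For a box c \in R_{P,Q} \ D, let e_c be the westward boundary edge in the column of c entering vertex labeled v, and n_c the northward boundary edge in the row of c entering vertex labeled w. Then w = v + a(c)·q - (l(c)+1)·p. In particular w = v iff p·(l(c)+1) = q·a(c), and v < w iff p·(l(c)+1) < q·a(c). -/
import Mathlib


/-- A Young diagram: a finite down-closed subset of ℕ². -/
def IsYoung (D : Finset (ℕ × ℕ)) : Prop :=
  ∀ x y x' y', (x, y) ∈ D → x' ≤ x → y' ≤ y → (x', y') ∈ D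

/-- Arm length of a box inside the diagram. -/
def arm (D : Finset (ℕ × ℕ)) (c : ℕ × ℕ) : ℕ :=
  (D.filter fun d => d.2 = c.2 ∧ c.1 < d.1).card

/-- Leg length of a box inside the diagram. -/
def leg (D : Finset (ℕ × ℕ)) (c : ℕ × ℕ) : ℕ :=
  (D.filter fun d => d.1 = c.1 ∧ c.2 < d.2).card

/-- Arm length of a box in the complement of the diagram. -/
def coArm (D : Finset (ℕ × ℕ)) (c : ℕ × ℕ) : ℕ :=
  ((Finset.range c.1).filter fun x' => (x', c.2) ∉ D).card

/-- Leg length of a box in the complement of the diagram. -/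
def coLeg (D : Finset (ℕ × ℕ)) (c : ℕ × ℕ) : ℕ :=
  ((Finset.range c.2).filter fun y' => (c.1, y') ∉ D).card

/-- Length of column x of the diagram. -/
def colLen (D : Finset (ℕ × ℕ)) (x : ℕ) : ℕ := (D.filter fun c => c.1 = x).card

/-- Length of row y of the diagram. -/
def rowLen (D : Finset (ℕ × ℕ)) (y : ℕ) : ℕ := (D.filter fun c => c.2 = y).card

/-- Label of the endpoint of the westward boundary edge in column x.
The boundary path starts at the southeast corner (P,0) with label 0, each
westward step adds q and each northward step subtracts p; the westward edge in
column x ends at the point (x, colLen D x). -/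
def wlabel (D : Finset (ℕ × ℕ)) (p q P : ℕ) (x : ℕ) : ℤ :=
  ((P : ℤ) - x) * q - (colLen D x : ℤ) * p

/-- Label of the endpoint of the northward boundary edge in row y: it ends at
the point (rowLen D y, y+1). -/
def nlabel (D : Finset (ℕ × ℕ)) (p q P : ℕ) (y : ℕ) : ℤ :=
  ((P : ℤ) - rowLen D y) * q - ((y : ℤ) + 1) * p

/-- Number of westward boundary edges entering a vertex labeled v. -/
def Win (D : Finset (ℕ × ℕ)) (p q P : ℕ) (v : ℤ) : ℕ :=
  ((Finset.range P).filter fun x => wlabel D p q P x = v).card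

/-- Number of northward boundary edges entering a vertex labeled v. -/
def Nin (D : Finset (ℕ × ℕ)) (p q P Q : ℕ) (v : ℤ) : ℕ :=
  ((Finset.range Q).filter fun y => nlabel D p q P y = v).card

/-- The set of labels of vertices of the boundary graph M(D). -/
def labels (D : Finset (ℕ × ℕ)) (p q P Q : ℕ) : Finset ℤ :=
  ((Finset.range P).image (wlabel D p q P)) ∪ ((Finset.range Q).image (nlabel D p q P))

lemma mem_iff_lt_rowLen (D : Finset (ℕ × ℕ)) (hD : IsYoung D) (x y : ℕ) :
    (x, y) ∈ D ↔ x < rowLen D y := by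
  constructor
  · intro h
    have hsub : (Finset.range (x + 1)).image (fun j => (j, y)) ⊆
        D.filter fun c => c.2 = y := by
      intro a ha
      simp only [Finset.mem_image, Finset.mem_range] at ha
      obtain ⟨j, hj, rfl⟩ := ha
      exact Finset.mem_filter.mpr ⟨hD x y j y h (by omega) le_rfl, rfl⟩
    have := Finset.card_le_card hsub
    rwa [Finset.card_image_of_injective _ (fun a b hab => by simpa using hab),
      Finset.card_range] at this
  · intro h
    by_contra hx
    have hsub : (D.filter fun c => c.2 = y) ⊆
        (Finset.range x).image (fun j => (j, y)) := by
      intro a ha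
      simp only [Finset.mem_filter] at ha
      obtain ⟨a1, a2⟩ := a
      obtain ⟨haD, hay⟩ := ha
      simp only at hay
      subst hay
      simp only [Finset.mem_image, Finset.mem_range]
      refine ⟨a1, ?_, rfl⟩
      by_contra hax
      exact hx (hD a1 a2 x a2 haD (by omega) le_rfl)
    have := Finset.card_le_card hsub
    rw [Finset.card_image_of_injective _ (fun a b hab => by simpa using hab),
      Finset.card_range] at this
    exact absurd h (by simp [rowLen]; omega)

lemma mem_iff_lt_colLen (D : Finset (ℕ × ℕ)) (hD : IsYoung D) (x y : ℕ) :
    (x, y) ∈ D ↔ y < colLen D x := by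
  constructor
  · intro h
    have hsub : (Finset.range (y + 1)).image (fun j => (x, j)) ⊆
        D.filter fun c => c.1 = x := by
      intro a ha
      simp only [Finset.mem_image, Finset.mem_range] at ha
      obtain ⟨j, hj, rfl⟩ := ha
      exact Finset.mem_filter.mpr ⟨hD x y x j h le_rfl (by omega), rfl⟩
    have := Finset.card_le_card hsub
    rwa [Finset.card_image_of_injective _ (fun a b hab => by simpa using hab),
      Finset.card_range] at this
  · intro h
    by_contra hy
    have hsub : (D.filter fun c => c.1 = x) ⊆
        (Finset.range y).image (fun j => (x, j)) := by
      intro a ha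
      simp only [Finset.mem_filter] at ha
      obtain ⟨a1, a2⟩ := a
      obtain ⟨haD, hax⟩ := ha
      simp only at hax
      subst hax
      simp only [Finset.mem_image, Finset.mem_range]
      refine ⟨a2, ?_, rfl⟩
      by_contra hay
      exact hy (hD a1 a2 a1 y haD le_rfl (by omega))
    have := Finset.card_le_card hsub
    rw [Finset.card_image_of_injective _ (fun a b hab => by simpa using hab),
      Finset.card_range] at this
    exact absurd h (by simp [colLen]; omega)

theorem slope_to_edges_outside (D : Finset (ℕ × ℕ)) (hD : IsYoung D)
    (p q K : ℕ) (hp : 0 < p) (hq : 0 < q) (hK : 0 < K) (hpq : Nat.Coprime p q)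
    (hdiag : ∀ c ∈ D, q * c.1 + p * c.2 + p + q ≤ K * p * q)
    (c : ℕ × ℕ) (hc1 : c.1 < K * p) (hc2 : c.2 < K * q) (hc : c ∉ D) :
    nlabel D p q (K * p) c.2
        = wlabel D p q (K * p) c.1 + (coArm D c : ℤ) * q - ((coLeg D c : ℤ) + 1) * p ∧
    (nlabel D p q (K * p) c.2 = wlabel D p q (K * p) c.1
        ↔ p * (coLeg D c + 1) = q * coArm D c) ∧
    (wlabel D p q (K * p) c.1 < nlabel D p q (K * p) c.2
        ↔ p * (coLeg D c + 1) < q * coArm D c) := by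
  obtain ⟨x, y⟩ := c
  have hrl : rowLen D y ≤ x := by
    have := (mem_iff_lt_rowLen D hD x y).not.mp hc; omega
  have hcl : colLen D x ≤ y := by
    have := (mem_iff_lt_colLen D hD x y).not.mp hc; omega
  have hca : coArm D (x, y) = x - rowLen D y := by
    unfold coArm
    have : ((Finset.range x).filter fun x' => (x', y) ∉ D) = Finset.Ico (rowLen D y) x := by
      ext a
      simp only [Finset.mem_filter, Finset.mem_range, Finset.mem_Ico,
        mem_iff_lt_rowLen D hD]
      omega
    rw [this, Nat.card_Ico]
  have hcle : coLeg D (x, y) = y - colLen D x := by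
    unfold coLeg
    have : ((Finset.range y).filter fun y' => (x, y') ∉ D) = Finset.Ico (colLen D x) y := by
      ext a
      simp only [Finset.mem_filter, Finset.mem_range, Finset.mem_Ico,
        mem_iff_lt_colLen D hD]
      omega
    rw [this, Nat.card_Ico]
  have key : nlabel D p q (K * p) y
      = wlabel D p q (K * p) x + (coArm D (x, y) : ℤ) * q - ((coLeg D (x, y) : ℤ) + 1) * p := by
    unfold nlabel wlabel
    rw [hca, hcle]
    push_cast [Nat.cast_sub hrl, Nat.cast_sub hcl]
    ring
  refine ⟨key, ?_, ?_⟩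
  · rw [key]
    constructor
    · intro h
      have : ((coLeg D (x, y) : ℤ) + 1) * p = (coArm D (x, y) : ℤ) * q := by linarith
      exact_mod_cast by push_cast; linarith [this]
    · intro h
      have : ((p : ℤ)) * ((coLeg D (x, y) : ℤ) + 1) = (q : ℤ) * (coArm D (x, y)) := by
        exact_mod_cast h
      linarith
  · rw [key]
    constructor
    · intro h
      have : ((p : ℤ)) * ((coLeg D (x, y) : ℤ) + 1) < (q : ℤ) * (coArm D (x, y)) := by linarith
      exact_mod_cast this
    · intro h
      have : ((p : ℤ)) * ((coLeg D (x, y) : ℤ) + 1) < (q : ℤ) * (coArm D (x, y)) := by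
        exact_mod_cast h
      linarith
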